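/- arXiv:1703.00653 — 2 statements merged into one kernel-verified Lean document; each statement's English description precedes it below -/
import Mathlib

section
/- Let m ≥ 1 and k ≥ 1 be integers, let Ω ⊂ ℝ^m be compact with 0 ∈ Ω, and let G : Ω^k → ℝ be continuous with G(0,…,0) = 0. Suppose there exists C ≥ 0 such that for every sequence x = (x₁,x₂,…) ∈ Ω^∞ with only finitely many nonzero entries, ∑_{j=0}^{∞} G(x_{j+1},…,x_{j+k}) ≥ −C. Then there exist continuous functions G̃ : Ω^k → ℝ and Γ : Ω^{k−1} → ℝ such that G̃(y) ≥ 0 for all y ∈ Ω^k and G(x₁,…,x_k) = G̃(x₁,…,x_k) + Γ(x₁,…,x_{k−1}) − Γ(x₂,…,x_k) for all (x₁,…,x_k) ∈ Ω^k. -/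
noncomputable section Stmt10Aux

/-- The padded sequence: word `z 0, …, z (n-1)` followed by `y 0, …, y (k-2)`, then zeros. -/
def seqA (m k n : ℕ) (z : ℕ → Fin m → ℝ) (y : Fin (k-1) → Fin m → ℝ) : ℕ → Fin m → ℝ :=
  fun p => if p < n then z p else if h : p - n < k - 1 then y ⟨p - n, h⟩ else 0

/-- Sum of `G` over the full windows of the word `z 0 … z (n-1) y 0 … y (k-2)`. -/
def SA (m k : ℕ) (G : (Fin k → Fin m → ℝ) → ℝ) (n : ℕ) (z : ℕ → Fin m → ℝ)
    (y : Fin (k-1) → Fin m → ℝ) : ℝ :=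
  ∑ j ∈ Finset.range n, G (fun i : Fin k => seqA m k n z y (j + i))

def WS (m k : ℕ) (Ω : Set (Fin m → ℝ)) (G : (Fin k → Fin m → ℝ) → ℝ)
    (y : Fin (k-1) → Fin m → ℝ) : Set ℝ :=
  {s | ∃ n z, (∀ j, z j ∈ Ω) ∧ s = SA m k G n z y}

def Gam (m k : ℕ) (Ω : Set (Fin m → ℝ)) (G : (Fin k → Fin m → ℝ) → ℝ)
    (y : Fin (k-1) → Fin m → ℝ) : ℝ :=
  sInf (WS m k Ω G y)

theorem seqA_mem (m k n : ℕ) (Ω : Set (Fin m → ℝ)) (h0 : (0:Fin m → ℝ) ∈ Ω)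
    (z : ℕ → Fin m → ℝ) (hz : ∀ j, z j ∈ Ω) (y : Fin (k-1) → Fin m → ℝ)
    (hy : ∀ i, y i ∈ Ω) (p : ℕ) : seqA m k n z y p ∈ Ω := by
  unfold seqA
  split_ifs with h1 h2
  · exact hz p
  · exact hy _
  · exact h0

theorem seqA_eq_zero (m k n : ℕ) (z : ℕ → Fin m → ℝ) (y : Fin (k-1) → Fin m → ℝ)
    (p : ℕ) (hp : n + (k-1) ≤ p) : seqA m k n z y p = 0 := by
  unfold seqA
  split_ifs with h1 h2
  · omega
  · omega
  · rfl

theorem tsum_seqA (m k : ℕ) (hk : 1 ≤ k) (G : (Fin k → Fin m → ℝ) → ℝ) (hG0 : G 0 = 0)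
    (n : ℕ) (z : ℕ → Fin m → ℝ) (y : Fin (k-1) → Fin m → ℝ) :
    ∑' j : ℕ, G (fun i : Fin k => seqA m k n z y (j + i)) =
      ∑ j ∈ Finset.range (n + k), G (fun i : Fin k => seqA m k n z y (j + i)) := by
  apply tsum_eq_sum
  intro j hj
  rw [Finset.mem_range, not_lt] at hj
  have : (fun i : Fin k => seqA m k n z y (j + i)) = 0 := by
    funext i
    exact seqA_eq_zero m k n z y _ (by omega)
  rw [this, hG0]

theorem SA_lower (m k : ℕ) (hk : 1 ≤ k) (Ω : Set (Fin m → ℝ)) (h0 : (0:Fin m → ℝ) ∈ Ω)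
    (G : (Fin k → Fin m → ℝ) → ℝ) (hG0 : G 0 = 0) (C M : ℝ)
    (hM : ∀ w : Fin k → Fin m → ℝ, (∀ i, w i ∈ Ω) → |G w| ≤ M)
    (hbd : ∀ x : ℕ → Fin m → ℝ, (∀ n, x n ∈ Ω) → {n | x n ≠ 0}.Finite →
      -C ≤ ∑' j : ℕ, G (fun i : Fin k => x (j + i)))
    (n : ℕ) (z : ℕ → Fin m → ℝ) (hz : ∀ j, z j ∈ Ω)
    (y : Fin (k-1) → Fin m → ℝ) (hy : ∀ i, y i ∈ Ω) :
    -C - k * M ≤ SA m k G n z y := by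
  have hmem : ∀ p, seqA m k n z y p ∈ Ω := seqA_mem m k n Ω h0 z hz y hy
  have hfin : {p | seqA m k n z y p ≠ 0}.Finite := by
    apply Set.Finite.subset (Set.finite_Iio (n + (k-1)))
    intro p hp
    by_contra hlt
    exact hp (seqA_eq_zero m k n z y p (by simpa using hlt))
  have h1 := hbd _ hmem hfin
  rw [tsum_seqA m k hk G hG0] at h1
  have hsplit : ∑ j ∈ Finset.range (n + k), G (fun i : Fin k => seqA m k n z y (j + i)) =
      SA m k G n z y + ∑ j ∈ Finset.Ico n (n+k), G (fun i : Fin k => seqA m k n z y (j + i)) := by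
    rw [SA, Finset.range_eq_Ico, Finset.range_eq_Ico]
    exact (Finset.sum_Ico_consecutive (fun j => G (fun i : Fin k => seqA m k n z y (j + i))) (Nat.zero_le n) (Nat.le_add_right n k)).symm
  have h2 : (∑ j ∈ Finset.Ico n (n+k), G (fun i : Fin k => seqA m k n z y (j + i))) ≤ (k:ℝ) * M := by
    have := Finset.sum_le_card_nsmul (Finset.Ico n (n+k))
      (fun j => G (fun i : Fin k => seqA m k n z y (j + i))) M
      (fun j _ => le_of_abs_le (hM _ (fun i => hmem _)))
    simpa [Nat.card_Ico, nsmul_eq_mul] using this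
  rw [hsplit] at h1
  linarith

theorem WS_nonempty (m k : ℕ) (Ω : Set (Fin m → ℝ)) (h0 : (0:Fin m → ℝ) ∈ Ω)
    (G : (Fin k → Fin m → ℝ) → ℝ) (y : Fin (k-1) → Fin m → ℝ) :
    (WS m k Ω G y).Nonempty :=
  ⟨SA m k G 0 (fun _ => 0) y, 0, fun _ => 0, fun _ => h0, rfl⟩

theorem WS_bddBelow (m k : ℕ) (hk : 1 ≤ k) (Ω : Set (Fin m → ℝ)) (h0 : (0:Fin m → ℝ) ∈ Ω)
    (G : (Fin k → Fin m → ℝ) → ℝ) (hG0 : G 0 = 0) (C M : ℝ)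
    (hM : ∀ w : Fin k → Fin m → ℝ, (∀ i, w i ∈ Ω) → |G w| ≤ M)
    (hbd : ∀ x : ℕ → Fin m → ℝ, (∀ n, x n ∈ Ω) → {n | x n ≠ 0}.Finite →
      -C ≤ ∑' j : ℕ, G (fun i : Fin k => x (j + i)))
    (y : Fin (k-1) → Fin m → ℝ) (hy : ∀ i, y i ∈ Ω) :
    BddBelow (WS m k Ω G y) := by
  refine ⟨-C - k * M, ?_⟩
  rintro s ⟨n, z, hz, rfl⟩
  exact SA_lower m k hk Ω h0 G hG0 C M hM hbd n z hz y hy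

/-- The key step: appending a letter to a word ending in the first `k-1` letters of `x`. -/
theorem SA_append (m k : ℕ) (hk : 1 ≤ k) (G : (Fin k → Fin m → ℝ) → ℝ)
    (n : ℕ) (z : ℕ → Fin m → ℝ) (x : Fin k → Fin m → ℝ) :
    SA m k G (n+1) (fun j => if j < n then z j else x ⟨0, hk⟩)
        (fun i : Fin (k-1) => x ⟨i.val + 1, by omega⟩) =
      SA m k G n z (fun i : Fin (k-1) => x ⟨i.val, by omega⟩) + G x := by
  set z' : ℕ → Fin m → ℝ := fun j => if j < n then z j else x ⟨0, hk⟩ with hz'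
  set yt : Fin (k-1) → Fin m → ℝ := fun i => x ⟨i.val + 1, by omega⟩ with hyt
  set yh : Fin (k-1) → Fin m → ℝ := fun i => x ⟨i.val, by omega⟩ with hyh
  have hA : ∀ p, p < n + (k-1) → seqA m k (n+1) z' yt p = seqA m k n z yh p := by
    intro p hp
    unfold seqA
    rcases lt_trichotomy p n with h | h | h
    · rw [if_pos h, if_pos (by omega : p < n + 1), hz']
      simp [h]
    · rw [if_neg (by omega : ¬ p < n), if_pos (by omega : p < n + 1)]
      have h2 : p - n < k - 1 := by omega
      rw [dif_pos h2]
      simp only [hz', hyh]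
      rw [if_neg (by omega : ¬ p < n)]
      exact congrArg x (Fin.ext (show (0:ℕ) = p - n by omega))
    · rw [if_neg (by omega : ¬ p < n + 1), if_neg (by omega : ¬ p < n)]
      have h1 : p - (n+1) < k - 1 := by omega
      have h2 : p - n < k - 1 := by omega
      rw [dif_pos h1, dif_pos h2]
      simp only [hyt, hyh]
      exact congrArg x (Fin.ext (show p - (n+1) + 1 = p - n by omega))
  have hB : (fun i : Fin k => seqA m k (n+1) z' yt (n + i)) = x := by
    funext i
    unfold seqA
    rcases Nat.eq_zero_or_pos i.val with h | h
    · rw [if_pos (by omega : n + i.val < n + 1)]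
      simp only [hz']
      rw [if_neg (by omega : ¬ n + i.val < n)]
      exact congrArg x (Fin.ext (show (0:ℕ) = i.val by omega))
    · rw [if_neg (by omega : ¬ n + i.val < n + 1)]
      have h1 : n + i.val - (n+1) < k - 1 := by have := i.isLt; omega
      rw [dif_pos h1]
      simp only [hyt]
      exact congrArg x (Fin.ext (show n + i.val - (n+1) + 1 = i.val by omega))
  unfold SA
  rw [Finset.sum_range_succ]
  congr 1
  · apply Finset.sum_congr rfl
    intro j hj
    rw [Finset.mem_range] at hj
    congr 1
    funext i
    exact hA (j + i) (by have := i.isLt; omega)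
  · rw [hB]

theorem Gam_step (m k : ℕ) (hk : 1 ≤ k) (Ω : Set (Fin m → ℝ)) (h0 : (0:Fin m → ℝ) ∈ Ω)
    (G : (Fin k → Fin m → ℝ) → ℝ) (hG0 : G 0 = 0) (C M : ℝ)
    (hM : ∀ w : Fin k → Fin m → ℝ, (∀ i, w i ∈ Ω) → |G w| ≤ M)
    (hbd : ∀ x : ℕ → Fin m → ℝ, (∀ n, x n ∈ Ω) → {n | x n ≠ 0}.Finite →
      -C ≤ ∑' j : ℕ, G (fun i : Fin k => x (j + i)))
    (x : Fin k → Fin m → ℝ) (hx : ∀ i, x i ∈ Ω) :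
    Gam m k Ω G (fun i : Fin (k-1) => x ⟨i.val + 1, by omega⟩) ≤
      Gam m k Ω G (fun i : Fin (k-1) => x ⟨i.val, by omega⟩) + G x := by
  rw [← sub_le_iff_le_add]
  apply le_csInf (WS_nonempty m k Ω h0 G _)
  rintro s ⟨n, z, hz, rfl⟩
  rw [sub_le_iff_le_add]
  have hz' : ∀ j, (fun j => if j < n then z j else x ⟨0, hk⟩) j ∈ Ω := by
    intro j
    simp only
    split_ifs
    · exact hz j
    · exact hx _
  have hle : Gam m k Ω G (fun i : Fin (k-1) => x ⟨i.val + 1, by omega⟩) ≤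
      SA m k G (n+1) (fun j => if j < n then z j else x ⟨0, hk⟩)
        (fun i : Fin (k-1) => x ⟨i.val + 1, by omega⟩) :=
    csInf_le (WS_bddBelow m k hk Ω h0 G hG0 C M hM hbd _
        (fun i => hx _))
      ⟨n+1, _, hz', rfl⟩
  have heq := SA_append m k hk G n z x
  rw [heq] at hle
  linarith

theorem SA_compare (m k : ℕ) (hk : 1 ≤ k) (Ω : Set (Fin m → ℝ)) (h0 : (0:Fin m → ℝ) ∈ Ω)
    (G : (Fin k → Fin m → ℝ) → ℝ) (δ ε' : ℝ) (hδ : 0 < δ) (hε' : 0 ≤ ε')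
    (hU : ∀ w w' : Fin k → Fin m → ℝ, (∀ i, w i ∈ Ω) → (∀ i, w' i ∈ Ω) →
      dist w w' < δ → |G w - G w'| ≤ ε')
    (n : ℕ) (z : ℕ → Fin m → ℝ) (hz : ∀ j, z j ∈ Ω)
    (y y' : Fin (k-1) → Fin m → ℝ) (hy : ∀ i, y i ∈ Ω) (hy' : ∀ i, y' i ∈ Ω)
    (hd : ∀ i, dist (y i) (y' i) < δ) :
    |SA m k G n z y - SA m k G n z y'| ≤ ((k-1 : ℕ) : ℝ) * ε' := by
  unfold SA
  rw [← Finset.sum_sub_distrib]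
  calc |∑ j ∈ Finset.range n, (G (fun i : Fin k => seqA m k n z y (j + i)) -
          G (fun i : Fin k => seqA m k n z y' (j + i)))|
      ≤ ∑ j ∈ Finset.range n, |G (fun i : Fin k => seqA m k n z y (j + i)) -
          G (fun i : Fin k => seqA m k n z y' (j + i))| := Finset.abs_sum_le_sum_abs _ _
    _ = ∑ j ∈ Finset.Ico (n - (k-1)) n, |G (fun i : Fin k => seqA m k n z y (j + i)) -
          G (fun i : Fin k => seqA m k n z y' (j + i))| := by
        refine (Finset.sum_subset ?_ ?_).symm
        · intro j hj
          rw [Finset.mem_Ico] at hj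
          exact Finset.mem_range.mpr hj.2
        · intro j hjr hj
          rw [Finset.mem_range] at hjr
          rw [Finset.mem_Ico, not_and_or] at hj
          have hjs : j < n - (k-1) := by omega
          have : (fun i : Fin k => seqA m k n z y (j + i)) =
              (fun i : Fin k => seqA m k n z y' (j + i)) := by
            funext i
            have hpi : j + i.val < n := by have := i.isLt; omega
            unfold seqA
            rw [if_pos hpi, if_pos hpi]
          rw [this, sub_self, abs_zero]
    _ ≤ (Finset.Ico (n - (k-1)) n).card • ε' := by
        apply Finset.sum_le_card_nsmul
        intro j hj
        apply hU _ _ (fun i => seqA_mem m k n Ω h0 z hz y hy _)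
          (fun i => seqA_mem m k n Ω h0 z hz y' hy' _)
        rw [dist_pi_lt_iff hδ]
        intro i
        unfold seqA
        split_ifs
        · simpa using hδ
        · exact hd _
        · simpa using hδ
    _ ≤ ((k-1 : ℕ) : ℝ) * ε' := by
        rw [nsmul_eq_mul]
        apply mul_le_mul_of_nonneg_right _ hε'
        rw [Nat.cast_le, Nat.card_Ico]
        omega

theorem Gam_compare (m k : ℕ) (hk : 1 ≤ k) (Ω : Set (Fin m → ℝ)) (h0 : (0:Fin m → ℝ) ∈ Ω)
    (G : (Fin k → Fin m → ℝ) → ℝ) (hG0 : G 0 = 0) (C M : ℝ)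
    (hM : ∀ w : Fin k → Fin m → ℝ, (∀ i, w i ∈ Ω) → |G w| ≤ M)
    (hbd : ∀ x : ℕ → Fin m → ℝ, (∀ n, x n ∈ Ω) → {n | x n ≠ 0}.Finite →
      -C ≤ ∑' j : ℕ, G (fun i : Fin k => x (j + i)))
    (δ ε' : ℝ) (hδ : 0 < δ) (hε' : 0 ≤ ε')
    (hU : ∀ w w' : Fin k → Fin m → ℝ, (∀ i, w i ∈ Ω) → (∀ i, w' i ∈ Ω) →
      dist w w' < δ → |G w - G w'| ≤ ε')
    (y y' : Fin (k-1) → Fin m → ℝ) (hy : ∀ i, y i ∈ Ω) (hy' : ∀ i, y' i ∈ Ω)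
    (hd : ∀ i, dist (y i) (y' i) < δ) :
    |Gam m k Ω G y - Gam m k Ω G y'| ≤ ((k-1 : ℕ) : ℝ) * ε' := by
  have key : ∀ (u u' : Fin (k-1) → Fin m → ℝ), (∀ i, u i ∈ Ω) → (∀ i, u' i ∈ Ω) →
      (∀ i, dist (u i) (u' i) < δ) →
      Gam m k Ω G u ≤ Gam m k Ω G u' + ((k-1 : ℕ) : ℝ) * ε' := by
    intro u u' hu hu' hdu
    rw [← sub_le_iff_le_add]
    apply le_csInf (WS_nonempty m k Ω h0 G _)
    rintro s ⟨n, z, hz, rfl⟩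
    rw [sub_le_iff_le_add]
    have h1 : Gam m k Ω G u ≤ SA m k G n z u :=
      csInf_le (WS_bddBelow m k hk Ω h0 G hG0 C M hM hbd u hu) ⟨n, z, hz, rfl⟩
    have h2 := SA_compare m k hk Ω h0 G δ ε' hδ hε' hU n z hz u u' hu hu' hdu
    rw [abs_sub_le_iff] at h2
    linarith [h2.1]
  rw [abs_sub_le_iff]
  constructor
  · linarith [key y y' hy hy' hd]
  · refine sub_le_iff_le_add.mpr ?_
    have := key y' y hy' hy (fun i => by rw [dist_comm]; exact hd i)
    linarith

end Stmt10Aux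

theorem stmt10 (m k : ℕ) (hm : 1 ≤ m) (hk : 1 ≤ k) (Ω : Set (Fin m → ℝ))
    (hΩc : IsCompact Ω) (h0 : (0 : Fin m → ℝ) ∈ Ω)
    (G : (Fin k → Fin m → ℝ) → ℝ)
    (hGcont : ContinuousOn G {y | ∀ i, y i ∈ Ω})
    (hG0 : G 0 = 0)
    (C : ℝ) (hC : 0 ≤ C)
    (hbd : ∀ x : ℕ → Fin m → ℝ, (∀ n, x n ∈ Ω) → {n | x n ≠ 0}.Finite →
      -C ≤ ∑' j : ℕ, G (fun i : Fin k => x (j + i))) :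
    ∃ Gt : (Fin k → Fin m → ℝ) → ℝ, ∃ Γ : (Fin (k - 1) → Fin m → ℝ) → ℝ,
      ContinuousOn Gt {y | ∀ i, y i ∈ Ω} ∧
      ContinuousOn Γ {y | ∀ i, y i ∈ Ω} ∧
      (∀ y : Fin k → Fin m → ℝ, (∀ i, y i ∈ Ω) → 0 ≤ Gt y) ∧
      (∀ y : Fin k → Fin m → ℝ, (∀ i, y i ∈ Ω) →
        G y = Gt y + Γ (fun i => y ⟨i.val, lt_of_lt_of_le i.isLt (Nat.sub_le k 1)⟩) -
          Γ (fun i => y ⟨i.val + 1, by have h := i.isLt; omega⟩)) := by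
  -- compactness of the window space
  have hset : {y : Fin k → Fin m → ℝ | ∀ i, y i ∈ Ω} = Set.pi Set.univ (fun _ => Ω) := by
    ext y; simp [Set.mem_pi]
  have hcomp : IsCompact {y : Fin k → Fin m → ℝ | ∀ i, y i ∈ Ω} := by
    rw [hset]; exact isCompact_univ_pi (fun _ => hΩc)
  -- boundedness of G
  obtain ⟨M, hM0⟩ := hcomp.exists_bound_of_continuousOn hGcont
  have hM : ∀ w : Fin k → Fin m → ℝ, (∀ i, w i ∈ Ω) → |G w| ≤ M := by
    intro w hw
    have := hM0 w hw
    simpa [Real.norm_eq_abs] using this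
  -- uniform continuity of G
  have hUC := hcomp.uniformContinuousOn_of_continuous hGcont
  rw [Metric.uniformContinuousOn_iff] at hUC
  -- continuity of Gam
  have hGamCont : ContinuousOn (Gam m k Ω G)
      {y : Fin (k-1) → Fin m → ℝ | ∀ i, y i ∈ Ω} := by
    rw [Metric.continuousOn_iff]
    intro y hy ε hε
    have hk1 : (0:ℝ) < (k:ℝ) + 1 := by positivity
    have hε' : 0 < ε / ((k:ℝ) + 1) := by positivity
    obtain ⟨δ, hδpos, hδ⟩ := hUC (ε / ((k:ℝ) + 1)) hε'
    refine ⟨δ, hδpos, ?_⟩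
    intro y' hy' hdist
    have hd : ∀ i, dist (y' i) (y i) < δ :=
      fun i => lt_of_le_of_lt (dist_le_pi_dist y' y i) hdist
    have hcmp := Gam_compare m k hk Ω h0 G hG0 C M hM hbd δ (ε / ((k:ℝ)+1))
      hδpos (le_of_lt hε')
      (fun w w' hw hw' hww' => by
        have := hδ w hw w' hw' hww'
        rw [Real.dist_eq] at this
        exact le_of_lt this)
      y' y hy' hy hd
    rw [Real.dist_eq]
    refine lt_of_le_of_lt hcmp ?_
    have h1 : ((k-1:ℕ):ℝ) < (k:ℝ) + 1 := by
      have : ((k-1:ℕ):ℝ) ≤ (k:ℝ) := by exact_mod_cast Nat.sub_le k 1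
      linarith
    have h2 : ((k:ℝ)+1) * (ε / ((k:ℝ)+1)) = ε := mul_div_cancel₀ ε (ne_of_gt hk1)
    nlinarith [hε'.le, h1, h2]
  refine ⟨fun y => G y +
      Gam m k Ω G (fun i => y ⟨i.val, lt_of_lt_of_le i.isLt (Nat.sub_le k 1)⟩) -
      Gam m k Ω G (fun i => y ⟨i.val + 1, by have h := i.isLt; omega⟩),
    fun y => -(Gam m k Ω G y), ?_, ?_, ?_, ?_⟩
  · -- continuity of Gt
    have hhead : Continuous (fun (y : Fin k → Fin m → ℝ) =>
        (fun i : Fin (k-1) => y ⟨i.val, lt_of_lt_of_le i.isLt (Nat.sub_le k 1)⟩)) :=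
      continuous_pi (fun i => continuous_apply _)
    have htail : Continuous (fun (y : Fin k → Fin m → ℝ) =>
        (fun i : Fin (k-1) => y ⟨i.val + 1, by have h := i.isLt; omega⟩)) :=
      continuous_pi (fun i => continuous_apply _)
    refine ContinuousOn.sub (ContinuousOn.add hGcont ?_) ?_
    · exact hGamCont.comp hhead.continuousOn (fun y hy i => hy _)
    · exact hGamCont.comp htail.continuousOn (fun y hy i => hy _)
  · exact hGamCont.neg
  · intro y hy
    have := Gam_step m k hk Ω h0 G hG0 C M hM hbd y hy
    beta_reduce
    linarith
  · intro y hy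
    beta_reduce
    ring
end

section
/- Let α = (α_n)_{n∈ℤ} be a sequence of real numbers with α_n = 0 for n < 0, and suppose: ∑_n |α_n|⁶ < ∞; ∑_n |α_{n+3} − α_{n+2} − α_{n+1} + α_n|² < ∞ (i.e. (S−1)²(S+1)α ∈ ℓ²); and ∑_n |α_{n+2} − 2α_{n+1} + α_n|⁴ < ∞ (i.e. (S−1)²α ∈ ℓ⁴). Set γ_n = α_{n+2} − α_n. Then for all integers m₁, m₂, m₃, m₄: (a) ∑_{j∈ℤ} |α_{j+m₁} α_{j+m₂} γ_{j+m₃} γ_{j+m₄}| < ∞; (b) ∑_{j∈ℤ} |α_{j+m₁} α_{j+m₂} α_{j+m₃} (γ_{j+m₄+1} − γ_{j+m₄})| < ∞; (c) the series ∑_{j∈ℤ} α_{j+m₁} α_{j+m₂} α_{j+m₃} γ_{j+m₄} converges conditionally, i.e. the symmetric partial sums ∑_{j=−N}^{N} α_{j+m₁} α_{j+m₂} α_{j+m₃} γ_{j+m₄} converge to a finite limit as N → ∞. -/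
-- AM-GM for 3 nonneg reals
lemma amgm3 (x y z : ℝ) (hx : 0 ≤ x) (hy : 0 ≤ y) (hz : 0 ≤ z) :
    x * y * z ≤ x^3/3 + y^3/3 + z^3/3 := by
  nlinarith [mul_nonneg (add_nonneg (add_nonneg hx hy) hz) (sq_nonneg (x - y)),
    mul_nonneg (add_nonneg (add_nonneg hx hy) hz) (sq_nonneg (y - z)),
    mul_nonneg (add_nonneg (add_nonneg hx hy) hz) (sq_nonneg (x - z))]

lemma young2 (x y : ℝ) : x * y ≤ x^2/2 + y^2/2 := by nlinarith [sq_nonneg (x - y)]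

-- p q^2 ≤ p³/3 + 2q³/3
lemma young3 (p q : ℝ) (hp : 0 ≤ p) (hq : 0 ≤ q) : p * q^2 ≤ p^3/3 + 2*q^3/3 := by
  nlinarith [mul_nonneg (sq_nonneg (p - q)) (add_nonneg hp (by linarith : (0:ℝ) ≤ 2*q))]

-- pointwise for (a): abcd ≤ a⁶/6 + b⁶/6 + c³/3 + d³/3
lemma younga (a b c d : ℝ) (ha : 0 ≤ a) (hb : 0 ≤ b) (hc : 0 ≤ c) (hd : 0 ≤ d) :
    a*b*c*d ≤ a^6/6 + b^6/6 + c^3/3 + d^3/3 := by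
  have h1 : (a*b)*c*d ≤ (a*b)^3/3 + c^3/3 + d^3/3 := amgm3 _ _ _ (mul_nonneg ha hb) hc hd
  have h2 : (a*b)^3 ≤ a^6/2 + b^6/2 := by
    have := young2 (a^3) (b^3); nlinarith
  nlinarith

-- pointwise for (b): abce ≤ a⁶/6 + b⁶/6 + c⁶/6 + e²/2
lemma youngb (a b c e : ℝ) (ha : 0 ≤ a) (hb : 0 ≤ b) (hc : 0 ≤ c) :
    a*b*c*e ≤ a^6/6 + b^6/6 + c^6/6 + e^2/2 := by
  have h1 : (a*b*c)*e ≤ (a*b*c)^2/2 + e^2/2 := young2 _ _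
  have h2 : (a*b*c)^2 ≤ (a^2)^3/3 + (b^2)^3/3 + (c^2)^3/3 := by
    have := amgm3 (a^2) (b^2) (c^2) (sq_nonneg a) (sq_nonneg b) (sq_nonneg c)
    nlinarith
  nlinarith

-- pointwise for the ℓ³ lemma: uvw ≤ (32/3)u⁶ + (1/24)v³ + (1/2)w²
lemma youngc (u v w : ℝ) (hu : 0 ≤ u) (hv : 0 ≤ v) (hw : 0 ≤ w) :
    u*v*w ≤ (32/3)*u^6 + (1/24)*v^3 + (1/2)*w^2 := by
  have h1 : (u*v)*w ≤ (u*v)^2/2 + w^2/2 := young2 _ _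
  have h2 : (4*u^2) * (v/2)^2 ≤ (4*u^2)^3/3 + 2*(v/2)^3/3 := young3 _ _ (by positivity) (by linarith)
  nlinarith

lemma cube_add (x y : ℝ) (hx : 0 ≤ x) (hy : 0 ≤ y) : (x+y)^3 ≤ 4*(x^3 + y^3) := by
  nlinarith [mul_nonneg (add_nonneg hx hy) (sq_nonneg (x - y))]

lemma sq_add (x y : ℝ) : (x+y)^2 ≤ 2*(x^2 + y^2) := by nlinarith [sq_nonneg (x - y)]

lemma absf_diff (x y : ℝ) : abs (abs x * x - abs y * y) ≤ (abs x + abs y) * abs (x - y) := by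
  have h : abs x * x - abs y * y = abs x * (x-y) + (abs x - abs y) * y := by ring
  rw [h]
  calc abs (abs x * (x-y) + (abs x - abs y) * y)
      ≤ abs (abs x * (x-y)) + abs ((abs x - abs y) * y) := abs_add_le _ _
    _ ≤ abs x * abs (x-y) + abs (x-y) * abs y := by
        rw [abs_mul, abs_mul, abs_abs]
        exact add_le_add le_rfl
          (mul_le_mul_of_nonneg_right (abs_abs_sub_abs_le_abs_sub x y) (abs_nonneg y))
    _ = (abs x + abs y) * abs (x-y) := by ring


open Filter Finset

namespace Stmt18

noncomputable def G (α : ℤ → ℝ) (n : ℤ) : ℝ := α (n+2) - α n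
noncomputable def D (α : ℤ → ℝ) (n : ℤ) : ℝ := (α (n+3) - α (n+1)) - (α (n+2) - α n)

lemma D_eq_G (α : ℤ → ℝ) (n : ℤ) : D α n = G α (n+1) - G α n := by
  unfold D G
  rw [show n+1+2 = n+3 from by ring]

lemma summable_shift {g : ℤ → ℝ} (hg : Summable g) (m : ℤ) :
    Summable fun j => g (j + m) :=
  ((Equiv.addRight m).summable_iff (f := g)).2 hg

lemma exists_bound {α : ℤ → ℝ} (h6 : Summable fun n : ℤ => |α n| ^ (6:ℕ)) :
    ∃ M : ℝ, 1 ≤ M ∧ ∀ n, |α n| ≤ M := by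
  refine ⟨max 1 (∑' n : ℤ, |α n| ^ (6:ℕ)), le_max_left _ _, fun n => ?_⟩
  rcases le_or_gt (|α n|) 1 with h | h
  · exact h.trans (le_max_left _ _)
  · have h1 : |α n| ≤ |α n| ^ (6:ℕ) := le_self_pow₀ h.le (by norm_num)
    exact h1.trans ((Summable.le_tsum h6 n (fun j _ => by positivity)).trans (le_max_right _ _))

lemma tendsto_cof {α : ℤ → ℝ} (h6 : Summable fun n : ℤ => |α n| ^ (6:ℕ)) :
    Tendsto α cofinite (nhds 0) := by
  have h := h6.tendsto_cofinite_zero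
  rw [Metric.tendsto_nhds] at h ⊢
  intro ε hε
  have hε6 : 0 < (min ε 1) ^ (6:ℕ) := by positivity
  filter_upwards [h _ hε6] with n hn
  simp only [Real.dist_eq, sub_zero] at hn ⊢
  by_contra hc
  push_neg at hc
  have h1 : min ε 1 ≤ |α n| := le_trans (min_le_left _ _) hc
  have h2 : (min ε 1) ^ (6:ℕ) ≤ |α n| ^ (6:ℕ) :=
    pow_le_pow_left₀ (le_min hε.le one_pos.le) h1 6
  rw [abs_of_nonneg (by positivity)] at hn
  linarith

lemma tendsto_shift {α : ℤ → ℝ} (h6 : Summable fun n : ℤ => |α n| ^ (6:ℕ)) (c : ℤ) :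
    Tendsto (fun N : ℕ => α ((N:ℤ) + c)) atTop (nhds 0) := by
  have h1 : Tendsto (fun N : ℕ => (N:ℤ) + c) atTop atTop :=
    tendsto_atTop_add_const_right _ c tendsto_natCast_atTop_atTop
  have h2 : Tendsto (fun N : ℕ => (N:ℤ) + c) atTop cofinite :=
    h1.mono_right (by rw [Int.cofinite_eq]; exact le_sup_right)
  exact (tendsto_cof h6).comp h2

lemma tendsto_Icc : Tendsto (fun N : ℕ => Finset.Icc (-(N:ℤ)) N) atTop atTop := by
  apply tendsto_atTop_finset_of_monotone
  · intro a b hab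
    have : (a:ℤ) ≤ b := by exact_mod_cast hab
    exact Finset.Icc_subset_Icc (by omega) this
  · intro x
    exact ⟨x.natAbs, Finset.mem_Icc.mpr ⟨by omega, by omega⟩⟩

lemma tendsto_sum_Icc {g : ℤ → ℝ} (hg : Summable g) :
    Tendsto (fun N : ℕ => ∑ j ∈ Finset.Icc (-(N:ℤ)) N, g j) atTop (nhds (∑' j, g j)) :=
  hg.hasSum.comp tendsto_Icc

lemma Icc_insert_top (a b : ℤ) (h : a ≤ b + 1) :
    Finset.Icc a (b+1) = insert (b+1) (Finset.Icc a b) := by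
  ext x; simp only [Finset.mem_Icc, Finset.mem_insert]; omega

lemma Icc_insert_bot (a b : ℤ) (h : a ≤ b) :
    Finset.Icc a b = insert a (Finset.Icc (a+1) b) := by
  ext x; simp only [Finset.mem_Icc, Finset.mem_insert]; omega

lemma sum_shift (g : ℤ → ℝ) (a b t : ℤ) :
    ∑ j ∈ Finset.Icc a b, g (j + t) = ∑ j ∈ Finset.Icc (a+t) (b+t), g j := by
  rw [← Finset.map_add_right_Icc, Finset.sum_map]
  rfl



-- ℓ³ lemma, to be appended
set_option maxHeartbeats 1000000 in
lemma summable_G3 {α : ℤ → ℝ} (h0 : ∀ n : ℤ, n < 0 → α n = 0)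
    (h6 : Summable fun n : ℤ => |α n| ^ (6:ℕ))
    (hD : Summable fun n : ℤ => |D α n| ^ (2:ℕ)) :
    Summable fun n : ℤ => |G α n| ^ (3:ℕ) := by
  obtain ⟨M, hM1, hM⟩ := exists_bound h6
  set A6 := ∑' n : ℤ, |α n| ^ (6:ℕ) with hA6
  set DD := ∑' n : ℤ, |D α n| ^ (2:ℕ) with hDDdef
  set C : ℝ := (3/2) * ((32/3)*A6 + 2*DD + 8*M^3) with hC
  have cube : ∀ x : ℝ, |x| ^ (3:ℕ) = x * (|x| * x) := by
    intro x
    rcases abs_cases x with ⟨h,_⟩|⟨h,_⟩ <;> rw [h] <;> ring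
  have hGb : ∀ n, |G α n| ≤ 2*M := by
    intro n
    calc |G α n| ≤ |α (n+2)| + |α n| := abs_sub _ _
      _ ≤ 2*M := by have := hM (n+2); have := hM n; linarith
  have hfb : ∀ n, |(|G α n| * G α n)| ≤ 4*M^2 := by
    intro n; rw [abs_mul, abs_abs]
    have h1 := hGb n
    have h2 : (0:ℝ) ≤ |G α n| := abs_nonneg _
    nlinarith
  have key : ∀ N : ℤ, 2 ≤ N → ∑ n ∈ Finset.Icc (-N) N, |G α n| ^ (3:ℕ) ≤ C := by
    intro N hN
    set f : ℤ → ℝ := fun n => |G α n| * G α n with hfdef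
    set T := ∑ n ∈ Finset.Icc (-N) N, |G α n| ^ (3:ℕ) with hT
    have step1 : T = (∑ n ∈ Finset.Icc (-N) N, α (n+2) * f n)
        - ∑ n ∈ Finset.Icc (-N) N, α n * f n := by
      rw [← Finset.sum_sub_distrib]
      apply Finset.sum_congr rfl
      intro n _
      rw [cube (G α n)]
      show G α n * f n = _
      simp only [G]
      ring
    have step2 : ∑ n ∈ Finset.Icc (-N) N, α (n+2) * f n
        = ∑ k ∈ Finset.Icc 0 (N+2), α k * f (k-2) := by
      calc ∑ n ∈ Finset.Icc (-N) N, α (n+2) * f n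
          = ∑ n ∈ Finset.Icc (-N) N, (fun k => α k * f (k-2)) (n+2) := by
            apply Finset.sum_congr rfl
            intro n _
            simp only []
            rw [show n+2-2 = n from by ring]
        _ = ∑ k ∈ Finset.Icc (-N+2) (N+2), α k * f (k-2) := sum_shift (fun k => α k * f (k-2)) (-N) N 2
        _ = ∑ k ∈ Finset.Icc 0 (N+2), α k * f (k-2) := by
            symm
            apply Finset.sum_subset (Finset.Icc_subset_Icc (by omega) le_rfl)
            intro x hx hnx
            have hx0 : x < 0 := by
              simp only [Finset.mem_Icc] at hx hnx; omega
            rw [h0 x hx0, zero_mul]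
    have step3 : ∑ n ∈ Finset.Icc (-N) N, α n * f n = ∑ k ∈ Finset.Icc 0 N, α k * f k := by
      symm
      apply Finset.sum_subset (Finset.Icc_subset_Icc (by omega) le_rfl)
      intro x hx hnx
      have hx0 : x < 0 := by simp only [Finset.mem_Icc] at hx hnx; omega
      rw [h0 x hx0, zero_mul]
    have step4 : ∑ k ∈ Finset.Icc 0 (N+2), α k * f (k-2)
        = (∑ k ∈ Finset.Icc 0 N, α k * f (k-2)) + α (N+1) * f (N+1-2) + α (N+2) * f (N+2-2) := by
      rw [show N+2 = (N+1)+1 from by ring, Icc_insert_top 0 (N+1) (by omega),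
        Finset.sum_insert (by simp [Finset.mem_Icc]), Icc_insert_top 0 N (by omega),
        Finset.sum_insert (by simp [Finset.mem_Icc])]
      ring
    have step5 : T = (∑ k ∈ Finset.Icc 0 N, (α k * f (k-2) - α k * f k))
        + (α (N+1) * f (N+1-2) + α (N+2) * f (N+2-2)) := by
      rw [step1, step2, step3, step4, Finset.sum_sub_distrib]
      ring
    have hGd : ∀ k:ℤ, |G α (k-2) - G α k| ≤ |D α (k-2)| + |D α (k-1)| := by
      intro k
      have e : G α (k-2) - G α k = -(D α (k-2) + D α (k-1)) := by
        rw [D_eq_G, D_eq_G, show k-2+1 = k-1 from by ring, show k-1+1 = k from by ring]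
        ring
      rw [e, abs_neg]
      exact abs_add_le _ _
    have term_bound : ∀ k:ℤ, α k * f (k-2) - α k * f k ≤
        (32/3)*|α k|^(6:ℕ) + (1/6)*|G α (k-2)|^(3:ℕ) + (1/6)*|G α k|^(3:ℕ)
        + |D α (k-2)|^(2:ℕ) + |D α (k-1)|^(2:ℕ) := by
      intro k
      have h1 : α k * f (k-2) - α k * f k ≤ |α k| * |f (k-2) - f k| := by
        calc α k * f (k-2) - α k * f k = α k * (f (k-2) - f k) := by ring
          _ ≤ |α k * (f (k-2) - f k)| := le_abs_self _
          _ = |α k| * |f (k-2) - f k| := abs_mul _ _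
      have h2 : |f (k-2) - f k| ≤ (|G α (k-2)| + |G α k|) * (|D α (k-2)| + |D α (k-1)|) := by
        calc |f (k-2) - f k| ≤ (|G α (k-2)| + |G α k|) * |G α (k-2) - G α k| := absf_diff _ _
          _ ≤ (|G α (k-2)| + |G α k|) * (|D α (k-2)| + |D α (k-1)|) :=
              mul_le_mul_of_nonneg_left (hGd k) (by positivity)
      have h6' : |α k| * |f (k-2) - f k|
          ≤ |α k| * ((|G α (k-2)| + |G α k|) * (|D α (k-2)| + |D α (k-1)|)) :=
        mul_le_mul_of_nonneg_left h2 (abs_nonneg _)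
      have h3 := youngc (|α k|) (|G α (k-2)| + |G α k|) (|D α (k-2)| + |D α (k-1)|)
        (abs_nonneg _) (by positivity) (by positivity)
      rw [mul_assoc] at h3
      have h4 := cube_add (|G α (k-2)|) (|G α k|) (abs_nonneg _) (abs_nonneg _)
      have h5 := sq_add (|D α (k-2)|) (|D α (k-1)|)
      linarith
    have b1 : ∑ k ∈ Finset.Icc (0:ℤ) N, |α k|^(6:ℕ) ≤ A6 :=
      Summable.sum_le_tsum _ (fun i _ => by positivity) h6
    have b2 : ∑ k ∈ Finset.Icc (0:ℤ) N, |G α (k-2)|^(3:ℕ) ≤ T := by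
      have e : ∑ k ∈ Finset.Icc (0:ℤ) N, |G α (k-2)|^(3:ℕ)
          = ∑ k ∈ Finset.Icc (-2:ℤ) (N-2), |G α k|^(3:ℕ) := by
        calc ∑ k ∈ Finset.Icc (0:ℤ) N, |G α (k-2)|^(3:ℕ)
            = ∑ k ∈ Finset.Icc (0:ℤ) N, (fun n => |G α n|^(3:ℕ)) (k + (-2)) := by
              apply Finset.sum_congr rfl; intro k _
              simp only []
              rw [show k + (-2) = k-2 from by ring]
          _ = ∑ k ∈ Finset.Icc (0+(-2):ℤ) (N+(-2)), |G α k|^(3:ℕ) := sum_shift (fun n => |G α n|^(3:ℕ)) 0 N (-2)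
          _ = ∑ k ∈ Finset.Icc (-2:ℤ) (N-2), |G α k|^(3:ℕ) := by rw [show (0:ℤ)+(-2) = -2 from by ring, show N+(-2) = N-2 from by ring]
      rw [e, hT]
      exact Finset.sum_le_sum_of_subset_of_nonneg
        (Finset.Icc_subset_Icc (by omega) (by omega)) (fun i _ _ => by positivity)
    have b3 : ∑ k ∈ Finset.Icc (0:ℤ) N, |G α k|^(3:ℕ) ≤ T := by
      rw [hT]
      exact Finset.sum_le_sum_of_subset_of_nonneg
        (Finset.Icc_subset_Icc (by omega) (by omega)) (fun i _ _ => by positivity)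
    have b4 : ∑ k ∈ Finset.Icc (0:ℤ) N, |D α (k-2)|^(2:ℕ) ≤ DD := by
      have e : ∑ k ∈ Finset.Icc (0:ℤ) N, |D α (k-2)|^(2:ℕ)
          = ∑ k ∈ Finset.Icc (0+(-2):ℤ) (N+(-2)), |D α k|^(2:ℕ) := by
        rw [← sum_shift]
        apply Finset.sum_congr rfl; intro k _
        rw [show k + (-2) = k-2 from by ring]
      rw [e]
      exact Summable.sum_le_tsum _ (fun i _ => by positivity) hD
    have b5 : ∑ k ∈ Finset.Icc (0:ℤ) N, |D α (k-1)|^(2:ℕ) ≤ DD := by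
      have e : ∑ k ∈ Finset.Icc (0:ℤ) N, |D α (k-1)|^(2:ℕ)
          = ∑ k ∈ Finset.Icc (0+(-1):ℤ) (N+(-1)), |D α k|^(2:ℕ) := by
        rw [← sum_shift]
        apply Finset.sum_congr rfl; intro k _
        rw [show k + (-1) = k-1 from by ring]
      rw [e]
      exact Summable.sum_le_tsum _ (fun i _ => by positivity) hD
    have sum_bound : ∑ k ∈ Finset.Icc (0:ℤ) N, (α k * f (k-2) - α k * f k) ≤
        (32/3)*A6 + (1/6)*T + (1/6)*T + DD + DD := by
      calc ∑ k ∈ Finset.Icc (0:ℤ) N, (α k * f (k-2) - α k * f k)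
          ≤ ∑ k ∈ Finset.Icc (0:ℤ) N, ((32/3)*|α k|^(6:ℕ) + (1/6)*|G α (k-2)|^(3:ℕ)
            + (1/6)*|G α k|^(3:ℕ) + |D α (k-2)|^(2:ℕ) + |D α (k-1)|^(2:ℕ)) :=
            Finset.sum_le_sum (fun k _ => term_bound k)
        _ = (32/3)*(∑ k ∈ Finset.Icc (0:ℤ) N, |α k|^(6:ℕ))
            + (1/6)*(∑ k ∈ Finset.Icc (0:ℤ) N, |G α (k-2)|^(3:ℕ))
            + (1/6)*(∑ k ∈ Finset.Icc (0:ℤ) N, |G α k|^(3:ℕ))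
            + (∑ k ∈ Finset.Icc (0:ℤ) N, |D α (k-2)|^(2:ℕ))
            + (∑ k ∈ Finset.Icc (0:ℤ) N, |D α (k-1)|^(2:ℕ)) := by
            simp only [Finset.sum_add_distrib, Finset.mul_sum]
        _ ≤ (32/3)*A6 + (1/6)*T + (1/6)*T + DD + DD := by
            have hb1 : (32/3)*(∑ k ∈ Finset.Icc (0:ℤ) N, |α k|^(6:ℕ)) ≤ (32/3)*A6 := by linarith
            have hb2 : (1/6)*(∑ k ∈ Finset.Icc (0:ℤ) N, |G α (k-2)|^(3:ℕ)) ≤ (1/6)*T := by linarith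
            have hb3 : (1/6)*(∑ k ∈ Finset.Icc (0:ℤ) N, |G α k|^(3:ℕ)) ≤ (1/6)*T := by linarith
            linarith
    have bd1 : α (N+1) * f (N+1-2) ≤ 4*M^3 := by
      have e : M * (4*M^2) = 4*M^3 := by ring
      calc α (N+1) * f (N+1-2) ≤ |α (N+1) * f (N+1-2)| := le_abs_self _
        _ = |α (N+1)| * |f (N+1-2)| := abs_mul _ _
        _ ≤ M * (4*M^2) := mul_le_mul (hM _) (hfb _) (abs_nonneg _) (by linarith)
        _ = 4*M^3 := e
    have bd2 : α (N+2) * f (N+2-2) ≤ 4*M^3 := by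
      have e : M * (4*M^2) = 4*M^3 := by ring
      calc α (N+2) * f (N+2-2) ≤ |α (N+2) * f (N+2-2)| := le_abs_self _
        _ = |α (N+2)| * |f (N+2-2)| := abs_mul _ _
        _ ≤ M * (4*M^2) := mul_le_mul (hM _) (hfb _) (abs_nonneg _) (by linarith)
        _ = 4*M^3 := e
    have : T ≤ (32/3)*A6 + (1/3)*T + 2*DD + 8*M^3 := by
      rw [step5]
      linarith
    rw [hC]
    linarith
  apply summable_of_sum_le (c := C) (fun n => by positivity)
  intro u
  set K := u.sup (fun n => n.natAbs) with hK
  have hsub : u ⊆ Finset.Icc (-((K:ℤ)+2)) ((K:ℤ)+2) := by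
    intro x hx
    have hle : x.natAbs ≤ K := Finset.le_sup (f := fun n : ℤ => n.natAbs) hx
    simp only [Finset.mem_Icc]
    omega
  calc ∑ n ∈ u, |G α n|^(3:ℕ)
      ≤ ∑ n ∈ Finset.Icc (-((K:ℤ)+2)) ((K:ℤ)+2), |G α n|^(3:ℕ) :=
        Finset.sum_le_sum_of_subset_of_nonneg hsub (fun i _ _ => by positivity)
    _ ≤ C := key _ (by omega)

def Conv (g : ℕ → ℝ) : Prop := ∃ L : ℝ, Tendsto g atTop (nhds L)

def Dif (f g : ℕ → ℝ) : Prop := Conv (fun N => f N - g N)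

lemma Dif.symm {f g : ℕ → ℝ} (h : Dif f g) : Dif g f := by
  obtain ⟨L, hL⟩ := h
  exact ⟨-L, by simpa using (hL.neg.congr (fun N => by ring))⟩

lemma Dif.trans {f g h : ℕ → ℝ} (h1 : Dif f g) (h2 : Dif g h) : Dif f h := by
  obtain ⟨L1, hL1⟩ := h1
  obtain ⟨L2, hL2⟩ := h2
  exact ⟨L1 + L2, (hL1.add hL2).congr (fun N => by ring)⟩

lemma Dif.refl (f : ℕ → ℝ) : Dif f f := by
  refine ⟨0, ?_⟩
  have h : Tendsto (fun _ : ℕ => (0:ℝ)) atTop (nhds 0) := tendsto_const_nhds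
  exact h.congr (fun N => by ring)

lemma conv_of_dif {f g : ℕ → ℝ} (h : Dif f g) (hg : Conv g) : Conv f := by
  obtain ⟨L1, hL1⟩ := h
  obtain ⟨L2, hL2⟩ := hg
  exact ⟨L1 + L2, (hL1.add hL2).congr (fun N => by ring)⟩

noncomputable def P (α : ℤ → ℝ) (a b c d : ℤ) (N : ℕ) : ℝ :=
  ∑ j ∈ Finset.Icc (-(N:ℤ)) (N:ℤ), α (j+a) * α (j+b) * α (j+c) * (α (j+d+2) - α (j+d))

lemma P_comm12 (α : ℤ → ℝ) (a b c d : ℤ) : P α a b c d = P α b a c d := by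
  funext N
  exact Finset.sum_congr rfl (fun j _ => by ring)

lemma P_comm13 (α : ℤ → ℝ) (a b c d : ℤ) : P α a b c d = P α c b a d := by
  funext N
  exact Finset.sum_congr rfl (fun j _ => by ring)

lemma P_comm23 (α : ℤ → ℝ) (a b c d : ℤ) : P α a b c d = P α a c b d := by
  funext N
  exact Finset.sum_congr rfl (fun j _ => by ring)

lemma summable4_GG {α : ℤ → ℝ} (h0 : ∀ n : ℤ, n < 0 → α n = 0)
    (h6 : Summable fun n : ℤ => |α n| ^ (6:ℕ))
    (hD : Summable fun n : ℤ => |D α n| ^ (2:ℕ)) (k1 k2 k3 k4 : ℤ) :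
    Summable (fun j : ℤ => G α (j+k1) * α (j+k2) * α (j+k3) * G α (j+k4)) := by
  have hG3 := summable_G3 h0 h6 hD
  apply Summable.of_abs
  have s1 : Summable (fun j : ℤ => |α (j+k2)|^(6:ℕ)) := summable_shift h6 k2
  have s2 : Summable (fun j : ℤ => |α (j+k3)|^(6:ℕ)) := summable_shift h6 k3
  have s3 : Summable (fun j : ℤ => |G α (j+k1)|^(3:ℕ)) := summable_shift hG3 k1
  have s4 : Summable (fun j : ℤ => |G α (j+k4)|^(3:ℕ)) := summable_shift hG3 k4
  have hgsum : Summable (fun j : ℤ => |α (j+k2)|^(6:ℕ)/6 + |α (j+k3)|^(6:ℕ)/6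
      + |G α (j+k1)|^(3:ℕ)/3 + |G α (j+k4)|^(3:ℕ)/3) :=
    (((s1.div_const 6).add (s2.div_const 6)).add
      ((s3.div_const 3).add (s4.div_const 3))).congr (fun j => by ring)
  apply Summable.of_nonneg_of_le (fun j => abs_nonneg _) (fun j => ?_) hgsum
  rw [abs_mul, abs_mul, abs_mul]
  calc |G α (j+k1)| * |α (j+k2)| * |α (j+k3)| * |G α (j+k4)|
      = |α (j+k2)| * |α (j+k3)| * |G α (j+k1)| * |G α (j+k4)| := by ring
    _ ≤ |α (j+k2)|^6/6 + |α (j+k3)|^6/6 + |G α (j+k1)|^3/3 + |G α (j+k4)|^3/3 :=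
        younga _ _ _ _ (abs_nonneg _) (abs_nonneg _) (abs_nonneg _) (abs_nonneg _)

lemma summable4_D {α : ℤ → ℝ} (h6 : Summable fun n : ℤ => |α n| ^ (6:ℕ))
    (hD : Summable fun n : ℤ => |D α n| ^ (2:ℕ)) (k1 k2 k3 k4 : ℤ) :
    Summable (fun j : ℤ => α (j+k1) * α (j+k2) * α (j+k3) * D α (j+k4)) := by
  apply Summable.of_abs
  have s1 : Summable (fun j : ℤ => |α (j+k1)|^(6:ℕ)) := summable_shift h6 k1
  have s2 : Summable (fun j : ℤ => |α (j+k2)|^(6:ℕ)) := summable_shift h6 k2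
  have s3 : Summable (fun j : ℤ => |α (j+k3)|^(6:ℕ)) := summable_shift h6 k3
  have s4 : Summable (fun j : ℤ => |D α (j+k4)|^(2:ℕ)) := summable_shift hD k4
  have hgsum : Summable (fun j : ℤ => |α (j+k1)|^(6:ℕ)/6 + |α (j+k2)|^(6:ℕ)/6
      + |α (j+k3)|^(6:ℕ)/6 + |D α (j+k4)|^(2:ℕ)/2) :=
    (((s1.div_const 6).add (s2.div_const 6)).add
      ((s3.div_const 6).add (s4.div_const 2))).congr (fun j => by ring)
  apply Summable.of_nonneg_of_le (fun j => abs_nonneg _) (fun j => ?_) hgsum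
  rw [abs_mul, abs_mul, abs_mul]
  calc |α (j+k1)| * |α (j+k2)| * |α (j+k3)| * |D α (j+k4)|
      ≤ |α (j+k1)|^6/6 + |α (j+k2)|^6/6 + |α (j+k3)|^6/6 + |D α (j+k4)|^2/2 :=
        youngb _ _ _ _ (abs_nonneg _) (abs_nonneg _) (abs_nonneg _)

lemma moveA {α : ℤ → ℝ} (h0 : ∀ n : ℤ, n < 0 → α n = 0)
    (h6 : Summable fun n : ℤ => |α n| ^ (6:ℕ))
    (hD : Summable fun n : ℤ => |D α n| ^ (2:ℕ)) (a b c d : ℤ) :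
    Dif (P α (a+2) b c d) (P α a b c d) := by
  have hsum := summable4_GG h0 h6 hD a b c d
  have he : ∀ N : ℕ, P α (a+2) b c d N - P α a b c d N
      = ∑ j ∈ Finset.Icc (-(N:ℤ)) (N:ℤ), G α (j+a) * α (j+b) * α (j+c) * G α (j+d) := by
    intro N
    rw [P, P, ← Finset.sum_sub_distrib]
    apply Finset.sum_congr rfl
    intro j _
    rw [show j+(a+2) = j+a+2 from by ring]
    simp only [G]
    ring
  exact ⟨_, (tendsto_sum_Icc hsum).congr (fun N => (he N).symm)⟩

lemma moveB {α : ℤ → ℝ} (h0 : ∀ n : ℤ, n < 0 → α n = 0)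
    (h6 : Summable fun n : ℤ => |α n| ^ (6:ℕ))
    (hD : Summable fun n : ℤ => |D α n| ^ (2:ℕ)) (a b c d : ℤ) :
    Dif (P α a (b+2) c d) (P α a b c d) := by
  rw [P_comm12 α a (b+2) c d, P_comm12 α a b c d]
  exact moveA h0 h6 hD b a c d

lemma moveC {α : ℤ → ℝ} (h0 : ∀ n : ℤ, n < 0 → α n = 0)
    (h6 : Summable fun n : ℤ => |α n| ^ (6:ℕ))
    (hD : Summable fun n : ℤ => |D α n| ^ (2:ℕ)) (a b c d : ℤ) :
    Dif (P α a b (c+2) d) (P α a b c d) := by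
  rw [P_comm13 α a b (c+2) d, P_comm13 α a b c d]
  exact moveA h0 h6 hD c b a d

lemma moveD {α : ℤ → ℝ} (h6 : Summable fun n : ℤ => |α n| ^ (6:ℕ))
    (hD : Summable fun n : ℤ => |D α n| ^ (2:ℕ)) (a b c d : ℤ) :
    Dif (P α a b c (d+1)) (P α a b c d) := by
  have hsum := summable4_D h6 hD a b c d
  have he : ∀ N : ℕ, P α a b c (d+1) N - P α a b c d N
      = ∑ j ∈ Finset.Icc (-(N:ℤ)) (N:ℤ), α (j+a) * α (j+b) * α (j+c) * D α (j+d) := by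
    intro N
    rw [P, P, ← Finset.sum_sub_distrib]
    apply Finset.sum_congr rfl
    intro j _
    rw [show j+(d+1)+2 = j+d+3 from by ring, show j+(d+1) = j+d+1 from by ring]
    simp only [D]
    ring
  exact ⟨_, (tendsto_sum_Icc hsum).congr (fun N => (he N).symm)⟩


lemma tendsto_alpha_comp {α : ℤ → ℝ} (h6 : Summable fun n : ℤ => |α n| ^ (6:ℕ))
    (c : ℤ) {e : ℕ → ℤ} (he : ∀ N, e N = (N:ℤ) + c) :
    Tendsto (fun N => α (e N)) atTop (nhds 0) :=
  (tendsto_shift h6 c).congr (fun N => by rw [he N])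

lemma sum_Icc_shift_one (t : ℤ → ℝ) (N : ℕ) :
    (∑ j ∈ Finset.Icc (-(N:ℤ)+1) ((N:ℤ)+1), t j) - ∑ j ∈ Finset.Icc (-(N:ℤ)) (N:ℤ), t j
    = t ((N:ℤ)+1) - t (-(N:ℤ)) := by
  rw [Icc_insert_top (-(N:ℤ)+1) (N:ℤ) (by omega),
    Finset.sum_insert (by simp only [Finset.mem_Icc]; omega),
    Icc_insert_bot (-(N:ℤ)) (N:ℤ) (by omega),
    Finset.sum_insert (by simp only [Finset.mem_Icc]; omega)]
  ring

lemma sum_Icc_shift_two (g : ℤ → ℝ) (N : ℕ) :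
    (∑ j ∈ Finset.Icc (-(N:ℤ)+2) ((N:ℤ)+2), g j) - ∑ j ∈ Finset.Icc (-(N:ℤ)) (N:ℤ), g j
    = (g ((N:ℤ)+1) + g ((N:ℤ)+2)) - (g (-(N:ℤ)) + g (-(N:ℤ)+1)) := by
  have h1 : ∑ j ∈ Finset.Icc (-(N:ℤ)) ((N:ℤ)+2), g j
      = (∑ j ∈ Finset.Icc (-(N:ℤ)) (N:ℤ), g j) + (g ((N:ℤ)+1) + g ((N:ℤ)+2)) := by
    rw [show (N:ℤ)+2 = ((N:ℤ)+1)+1 from by ring,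
      Icc_insert_top (-(N:ℤ)) ((N:ℤ)+1) (by omega),
      Finset.sum_insert (by simp only [Finset.mem_Icc]; omega),
      Icc_insert_top (-(N:ℤ)) (N:ℤ) (by omega),
      Finset.sum_insert (by simp only [Finset.mem_Icc]; omega)]
    ring
  have h2 : ∑ j ∈ Finset.Icc (-(N:ℤ)) ((N:ℤ)+2), g j
      = (∑ j ∈ Finset.Icc (-(N:ℤ)+2) ((N:ℤ)+2), g j) + (g (-(N:ℤ)) + g (-(N:ℤ)+1)) := by
    rw [Icc_insert_bot (-(N:ℤ)) ((N:ℤ)+2) (by omega),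
      Finset.sum_insert (by simp only [Finset.mem_Icc]; omega),
      Icc_insert_bot (-(N:ℤ)+1) ((N:ℤ)+2) (by omega),
      Finset.sum_insert (by simp only [Finset.mem_Icc]; omega),
      show -(N:ℤ)+1+1 = -(N:ℤ)+2 from by ring]
    ring
  linarith

lemma moveCom1 {α : ℤ → ℝ} (h0 : ∀ n : ℤ, n < 0 → α n = 0)
    (h6 : Summable fun n : ℤ => |α n| ^ (6:ℕ)) (a b c d : ℤ) :
    Dif (P α (a+1) (b+1) (c+1) (d+1)) (P α a b c d) := by
  have he : ∀ N : ℕ, P α (a+1) (b+1) (c+1) (d+1) N - P α a b c d N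
      = (α ((N:ℤ)+1+a) * α ((N:ℤ)+1+b) * α ((N:ℤ)+1+c) * (α ((N:ℤ)+1+d+2) - α ((N:ℤ)+1+d)))
        - (α (-(N:ℤ)+a) * α (-(N:ℤ)+b) * α (-(N:ℤ)+c) * (α (-(N:ℤ)+d+2) - α (-(N:ℤ)+d))) := by
    intro N
    have e1 : P α (a+1) (b+1) (c+1) (d+1) N
        = ∑ j ∈ Finset.Icc (-(N:ℤ)+1) ((N:ℤ)+1),
            α (j+a) * α (j+b) * α (j+c) * (α (j+d+2) - α (j+d)) := by
      rw [P, ← sum_shift (fun j => α (j+a) * α (j+b) * α (j+c) * (α (j+d+2) - α (j+d)))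
        (-(N:ℤ)) (N:ℤ) 1]
      apply Finset.sum_congr rfl
      intro j _
      rw [show j+1+a = j+(a+1) from by ring, show j+1+b = j+(b+1) from by ring,
        show j+1+c = j+(c+1) from by ring, show j+1+d+2 = j+(d+1)+2 from by ring,
        show j+1+d = j+(d+1) from by ring]
    rw [e1, P]
    exact sum_Icc_shift_one (fun j => α (j+a) * α (j+b) * α (j+c) * (α (j+d+2) - α (j+d))) N
  have t1 := tendsto_alpha_comp h6 (1+a) (e := fun N : ℕ => (N:ℤ)+1+a) (fun N => by ring)
  have t2 := tendsto_alpha_comp h6 (1+b) (e := fun N : ℕ => (N:ℤ)+1+b) (fun N => by ring)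
  have t3 := tendsto_alpha_comp h6 (1+c) (e := fun N : ℕ => (N:ℤ)+1+c) (fun N => by ring)
  have t4 := tendsto_alpha_comp h6 (1+d+2) (e := fun N : ℕ => (N:ℤ)+1+d+2) (fun N => by ring)
  have t5 := tendsto_alpha_comp h6 (1+d) (e := fun N : ℕ => (N:ℤ)+1+d) (fun N => by ring)
  have hb := ((t1.mul t2).mul t3).mul (t4.sub t5)
  have hb0 : Tendsto (fun N : ℕ => α ((N:ℤ)+1+a) * α ((N:ℤ)+1+b) * α ((N:ℤ)+1+c)
      * (α ((N:ℤ)+1+d+2) - α ((N:ℤ)+1+d))) atTop (nhds 0) := by simpa using hb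
  have hv : ∀ᶠ N : ℕ in atTop, α (-(N:ℤ)+a) * α (-(N:ℤ)+b) * α (-(N:ℤ)+c)
      * (α (-(N:ℤ)+d+2) - α (-(N:ℤ)+d)) = 0 := by
    filter_upwards [eventually_ge_atTop (a.natAbs + 1)] with N hN
    rw [h0 (-(N:ℤ)+a) (by omega)]
    ring
  have hz : Tendsto (fun N : ℕ => α (-(N:ℤ)+a) * α (-(N:ℤ)+b) * α (-(N:ℤ)+c)
      * (α (-(N:ℤ)+d+2) - α (-(N:ℤ)+d))) atTop (nhds 0) :=
    Tendsto.congr' (hv.mono (fun N h => h.symm)) tendsto_const_nhds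
  refine ⟨0, ?_⟩
  have hfin := hb0.sub hz
  rw [sub_zero] at hfin
  exact hfin.congr (fun N => (he N).symm)

lemma difAk {α : ℤ → ℝ} (h0 : ∀ n : ℤ, n < 0 → α n = 0)
    (h6 : Summable fun n : ℤ => |α n| ^ (6:ℕ))
    (hD : Summable fun n : ℤ => |D α n| ^ (2:ℕ)) (b c d x : ℤ) (k : ℤ) :
    Dif (P α (x+2*k) b c d) (P α x b c d) := by
  induction k using Int.induction_on with
  | zero => rw [show x+2*(0:ℤ) = x from by ring]; exact Dif.refl _
  | succ k ih =>
      have m := moveA h0 h6 hD (x+2*(k:ℤ)) b c d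
      rw [show x+2*((k:ℤ)+1) = x+2*(k:ℤ)+2 from by ring]
      exact Dif.trans m ih
  | pred k ih =>
      have m := moveA h0 h6 hD (x+2*(-(k:ℤ)-1)) b c d
      rw [show x+2*(-(k:ℤ)-1)+2 = x+2*(-(k:ℤ)) from by ring] at m
      exact Dif.trans m.symm ih

lemma difA' {α : ℤ → ℝ} (h0 : ∀ n : ℤ, n < 0 → α n = 0)
    (h6 : Summable fun n : ℤ => |α n| ^ (6:ℕ))
    (hD : Summable fun n : ℤ => |D α n| ^ (2:ℕ)) (b c d x x' : ℤ) (k : ℤ)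
    (hk : x = x' + 2*k) : Dif (P α x b c d) (P α x' b c d) := by
  rw [hk]
  exact difAk h0 h6 hD b c d x' k

lemma difB' {α : ℤ → ℝ} (h0 : ∀ n : ℤ, n < 0 → α n = 0)
    (h6 : Summable fun n : ℤ => |α n| ^ (6:ℕ))
    (hD : Summable fun n : ℤ => |D α n| ^ (2:ℕ)) (a c d x x' : ℤ) (k : ℤ)
    (hk : x = x' + 2*k) : Dif (P α a x c d) (P α a x' c d) := by
  rw [P_comm12 α a x c d, P_comm12 α a x' c d]
  exact difA' h0 h6 hD a c d x x' k hk

lemma difC' {α : ℤ → ℝ} (h0 : ∀ n : ℤ, n < 0 → α n = 0)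
    (h6 : Summable fun n : ℤ => |α n| ^ (6:ℕ))
    (hD : Summable fun n : ℤ => |D α n| ^ (2:ℕ)) (a b d x x' : ℤ) (k : ℤ)
    (hk : x = x' + 2*k) : Dif (P α a b x d) (P α a b x' d) := by
  rw [P_comm13 α a b x d, P_comm13 α a b x' d]
  exact difA' h0 h6 hD b a d x x' k hk

lemma difDk {α : ℤ → ℝ} (h6 : Summable fun n : ℤ => |α n| ^ (6:ℕ))
    (hD : Summable fun n : ℤ => |D α n| ^ (2:ℕ)) (a b c x : ℤ) (t : ℤ) :
    Dif (P α a b c (x+t)) (P α a b c x) := by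
  induction t using Int.induction_on with
  | zero => rw [show x+(0:ℤ) = x from by ring]; exact Dif.refl _
  | succ k ih =>
      have m := moveD h6 hD a b c (x+(k:ℤ))
      rw [show x+((k:ℤ)+1) = x+(k:ℤ)+1 from by ring]
      exact Dif.trans m ih
  | pred k ih =>
      have m := moveD h6 hD a b c (x+(-(k:ℤ)-1))
      rw [show x+(-(k:ℤ)-1)+1 = x+(-(k:ℤ)) from by ring] at m
      exact Dif.trans m.symm ih

lemma difD' {α : ℤ → ℝ} (h6 : Summable fun n : ℤ => |α n| ^ (6:ℕ))
    (hD : Summable fun n : ℤ => |D α n| ^ (2:ℕ)) (a b c x x' : ℤ) :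
    Dif (P α a b c x) (P α a b c x') := by
  have h := difDk h6 hD a b c x' (x - x')
  rw [show x' + (x - x') = x from by ring] at h
  exact h

lemma difComK {α : ℤ → ℝ} (h0 : ∀ n : ℤ, n < 0 → α n = 0)
    (h6 : Summable fun n : ℤ => |α n| ^ (6:ℕ)) (a b c d : ℤ) (t : ℤ) :
    Dif (P α (a+t) (b+t) (c+t) (d+t)) (P α a b c d) := by
  induction t using Int.induction_on with
  | zero =>
      rw [show a+(0:ℤ) = a from by ring, show b+(0:ℤ) = b from by ring,
        show c+(0:ℤ) = c from by ring, show d+(0:ℤ) = d from by ring]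
      exact Dif.refl _
  | succ k ih =>
      have m := moveCom1 h0 h6 (a+(k:ℤ)) (b+(k:ℤ)) (c+(k:ℤ)) (d+(k:ℤ))
      rw [show a+((k:ℤ)+1) = a+(k:ℤ)+1 from by ring, show b+((k:ℤ)+1) = b+(k:ℤ)+1 from by ring,
        show c+((k:ℤ)+1) = c+(k:ℤ)+1 from by ring, show d+((k:ℤ)+1) = d+(k:ℤ)+1 from by ring]
      exact Dif.trans m ih
  | pred k ih =>
      have m := moveCom1 h0 h6 (a+(-(k:ℤ)-1)) (b+(-(k:ℤ)-1)) (c+(-(k:ℤ)-1)) (d+(-(k:ℤ)-1))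
      rw [show a+(-(k:ℤ)-1)+1 = a+(-(k:ℤ)) from by ring, show b+(-(k:ℤ)-1)+1 = b+(-(k:ℤ)) from by ring,
        show c+(-(k:ℤ)-1)+1 = c+(-(k:ℤ)) from by ring, show d+(-(k:ℤ)-1)+1 = d+(-(k:ℤ)) from by ring] at m
      exact Dif.trans m.symm ih

set_option maxHeartbeats 1000000 in
lemma keySBP {α : ℤ → ℝ} (h0 : ∀ n : ℤ, n < 0 → α n = 0)
    (h6 : Summable fun n : ℤ => |α n| ^ (6:ℕ)) (a b c d : ℤ) :
    Tendsto (fun N : ℕ => P α a b c d N + P α (b-2) (c-2) d (a-2) N + P α a (c-2) d (b-2) N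
      + P α a b d (c-2) N) atTop (nhds 0) := by
  have claim : ∀ N : ℕ, P α a b c d N + P α (b-2) (c-2) d (a-2) N + P α a (c-2) d (b-2) N
      + P α a b d (c-2) N
      = (α ((N:ℤ)+1+(a-2)) * α ((N:ℤ)+1+(b-2)) * α ((N:ℤ)+1+(c-2)) * α ((N:ℤ)+1+d)
          + α ((N:ℤ)+2+(a-2)) * α ((N:ℤ)+2+(b-2)) * α ((N:ℤ)+2+(c-2)) * α ((N:ℤ)+2+d))
        - (α (-(N:ℤ)+(a-2)) * α (-(N:ℤ)+(b-2)) * α (-(N:ℤ)+(c-2)) * α (-(N:ℤ)+d)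
          + α (-(N:ℤ)+1+(a-2)) * α (-(N:ℤ)+1+(b-2)) * α (-(N:ℤ)+1+(c-2)) * α (-(N:ℤ)+1+d)) := by
    intro N
    have e0 : P α a b c d N + P α (b-2) (c-2) d (a-2) N + P α a (c-2) d (b-2) N
        + P α a b d (c-2) N
        = ∑ j ∈ Finset.Icc (-(N:ℤ)) (N:ℤ),
            ((fun i => α (i+(a-2)) * α (i+(b-2)) * α (i+(c-2)) * α (i+d)) (j+2)
             - α (j+(a-2)) * α (j+(b-2)) * α (j+(c-2)) * α (j+d)) := by
      rw [P, P, P, P, ← Finset.sum_add_distrib, ← Finset.sum_add_distrib,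
        ← Finset.sum_add_distrib]
      apply Finset.sum_congr rfl
      intro j _
      simp only []
      rw [show j+2+(a-2) = j+a from by ring, show j+2+(b-2) = j+b from by ring,
        show j+2+(c-2) = j+c from by ring, show j+2+d = j+d+2 from by ring,
        show j+(a-2)+2 = j+a from by ring, show j+(b-2)+2 = j+b from by ring,
        show j+(c-2)+2 = j+c from by ring]
      ring
    rw [e0, Finset.sum_sub_distrib,
      sum_shift (fun i => α (i+(a-2)) * α (i+(b-2)) * α (i+(c-2)) * α (i+d)) (-(N:ℤ)) (N:ℤ) 2]
    exact sum_Icc_shift_two (fun i => α (i+(a-2)) * α (i+(b-2)) * α (i+(c-2)) * α (i+d)) N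
  have tp : ∀ s : ℤ, Tendsto (fun N : ℕ => α ((N:ℤ)+s+(a-2)) * α ((N:ℤ)+s+(b-2))
      * α ((N:ℤ)+s+(c-2)) * α ((N:ℤ)+s+d)) atTop (nhds 0) := by
    intro s
    have t1 := tendsto_alpha_comp h6 (s+(a-2)) (e := fun N : ℕ => (N:ℤ)+s+(a-2)) (fun N => by ring)
    have t2 := tendsto_alpha_comp h6 (s+(b-2)) (e := fun N : ℕ => (N:ℤ)+s+(b-2)) (fun N => by ring)
    have t3 := tendsto_alpha_comp h6 (s+(c-2)) (e := fun N : ℕ => (N:ℤ)+s+(c-2)) (fun N => by ring)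
    have t4 := tendsto_alpha_comp h6 (s+d) (e := fun N : ℕ => (N:ℤ)+s+d) (fun N => by ring)
    have hb := ((t1.mul t2).mul t3).mul t4
    simpa using hb
  have hb0 : Tendsto (fun N : ℕ => α ((N:ℤ)+1+(a-2)) * α ((N:ℤ)+1+(b-2)) * α ((N:ℤ)+1+(c-2))
      * α ((N:ℤ)+1+d) + α ((N:ℤ)+2+(a-2)) * α ((N:ℤ)+2+(b-2)) * α ((N:ℤ)+2+(c-2))
      * α ((N:ℤ)+2+d)) atTop (nhds 0) := by
    have := (tp 1).add (tp 2)
    simpa using this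
  have hv : ∀ᶠ N : ℕ in atTop, α (-(N:ℤ)+(a-2)) * α (-(N:ℤ)+(b-2)) * α (-(N:ℤ)+(c-2))
      * α (-(N:ℤ)+d) + α (-(N:ℤ)+1+(a-2)) * α (-(N:ℤ)+1+(b-2)) * α (-(N:ℤ)+1+(c-2))
      * α (-(N:ℤ)+1+d) = 0 := by
    filter_upwards [eventually_ge_atTop (a.natAbs + 3)] with N hN
    rw [h0 (-(N:ℤ)+(a-2)) (by omega), h0 (-(N:ℤ)+1+(a-2)) (by omega)]
    ring
  have hz : Tendsto (fun N : ℕ => α (-(N:ℤ)+(a-2)) * α (-(N:ℤ)+(b-2)) * α (-(N:ℤ)+(c-2))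
      * α (-(N:ℤ)+d) + α (-(N:ℤ)+1+(a-2)) * α (-(N:ℤ)+1+(b-2)) * α (-(N:ℤ)+1+(c-2))
      * α (-(N:ℤ)+1+d)) atTop (nhds 0) :=
    Tendsto.congr' (hv.mono (fun N h => h.symm)) tendsto_const_nhds
  have hfin := hb0.sub hz
  rw [sub_zero] at hfin
  exact hfin.congr (fun N => (claim N).symm)

lemma convA {α : ℤ → ℝ} (h0 : ∀ n : ℤ, n < 0 → α n = 0)
    (h6 : Summable fun n : ℤ => |α n| ^ (6:ℕ))
    (hD : Summable fun n : ℤ => |D α n| ^ (2:ℕ)) : Conv (P α 0 0 0 0) := by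
  have k := keySBP h0 h6 0 0 0 0
  have e2 : Dif (P α (0-2) (0-2) 0 (0-2)) (P α 0 0 0 0) :=
    ((difA' h0 h6 hD (0-2) 0 (0-2) (0-2) 0 (-1) (by ring)).trans
      (difB' h0 h6 hD 0 0 (0-2) (0-2) 0 (-1) (by ring))).trans
      (difD' h6 hD 0 0 0 (0-2) 0)
  have e3 : Dif (P α 0 (0-2) 0 (0-2)) (P α 0 0 0 0) :=
    (difB' h0 h6 hD 0 0 (0-2) (0-2) 0 (-1) (by ring)).trans
      (difD' h6 hD 0 0 0 (0-2) 0)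
  have e4 : Dif (P α 0 0 0 (0-2)) (P α 0 0 0 0) := difD' h6 hD 0 0 0 (0-2) 0
  obtain ⟨L2, h2⟩ := e2
  obtain ⟨L3, h3⟩ := e3
  obtain ⟨L4, h4⟩ := e4
  have comb := (((k.sub h2).sub h3).sub h4).div_const 4
  refine ⟨(0 - L2 - L3 - L4) / 4, comb.congr (fun N => ?_)⟩
  ring

lemma convB {α : ℤ → ℝ} (h0 : ∀ n : ℤ, n < 0 → α n = 0)
    (h6 : Summable fun n : ℤ => |α n| ^ (6:ℕ))
    (hD : Summable fun n : ℤ => |D α n| ^ (2:ℕ)) : Conv (P α 1 0 0 0) := by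
  have k := keySBP h0 h6 1 0 0 0
  have d2 : Dif (P α (0-2) (0-2) 0 (1-2)) (P α 0 0 0 0) :=
    ((difA' h0 h6 hD (0-2) 0 (1-2) (0-2) 0 (-1) (by ring)).trans
      (difB' h0 h6 hD 0 0 (1-2) (0-2) 0 (-1) (by ring))).trans
      (difD' h6 hD 0 0 0 (1-2) 0)
  have c2 : Conv (P α (0-2) (0-2) 0 (1-2)) := conv_of_dif d2 (convA h0 h6 hD)
  have e3 : Dif (P α 1 (0-2) 0 (0-2)) (P α 1 0 0 0) :=
    (difB' h0 h6 hD 1 0 (0-2) (0-2) 0 (-1) (by ring)).trans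
      (difD' h6 hD 1 0 0 (0-2) 0)
  have e4 : Dif (P α 1 0 0 (0-2)) (P α 1 0 0 0) := difD' h6 hD 1 0 0 (0-2) 0
  obtain ⟨L2, h2⟩ := c2
  obtain ⟨L3, h3⟩ := e3
  obtain ⟨L4, h4⟩ := e4
  have comb := (((k.sub h2).sub h3).sub h4).div_const 3
  refine ⟨(0 - L2 - L3 - L4) / 3, comb.congr (fun N => ?_)⟩
  ring

lemma convP {α : ℤ → ℝ} (h0 : ∀ n : ℤ, n < 0 → α n = 0)
    (h6 : Summable fun n : ℤ => |α n| ^ (6:ℕ))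
    (hD : Summable fun n : ℤ => |D α n| ^ (2:ℕ)) (a b c d : ℤ) : Conv (P α a b c d) := by
  have conv000 := convA h0 h6 hD
  have conv100 := convB h0 h6 hD
  have conv010 : Conv (P α 0 1 0 0) := by rw [P_comm12 α 0 1 0 0]; exact conv100
  have conv001 : Conv (P α 0 0 1 0) := by rw [P_comm13 α 0 0 1 0]; exact conv100
  have conv110 : Conv (P α 1 1 0 0) := by
    have f1 : Dif (P α 2 2 1 1) (P α 1 1 0 0) := by
      have h := difComK h0 h6 1 1 0 0 1
      norm_num at h
      exact h
    have f2 : Dif (P α 2 2 1 1) (P α 0 0 1 0) :=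
      ((difA' h0 h6 hD 2 1 1 2 0 1 (by ring)).trans
        (difB' h0 h6 hD 0 1 1 2 0 1 (by ring))).trans
        (difD' h6 hD 0 0 1 1 0)
    exact conv_of_dif (f1.symm.trans f2) conv001
  have conv101 : Conv (P α 1 0 1 0) := by rw [P_comm23 α 1 0 1 0]; exact conv110
  have conv011 : Conv (P α 0 1 1 0) := by rw [P_comm13 α 0 1 1 0]; exact conv110
  have conv111 : Conv (P α 1 1 1 0) := by
    have f1 : Dif (P α 2 2 2 1) (P α 1 1 1 0) := by
      have h := difComK h0 h6 1 1 1 0 1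
      norm_num at h
      exact h
    have f2 : Dif (P α 2 2 2 1) (P α 0 0 0 0) :=
      (((difA' h0 h6 hD 2 2 1 2 0 1 (by ring)).trans
        (difB' h0 h6 hD 0 2 1 2 0 1 (by ring))).trans
        (difC' h0 h6 hD 0 0 1 2 0 1 (by ring))).trans
        (difD' h6 hD 0 0 0 1 0)
    exact conv_of_dif (f1.symm.trans f2) conv000
  have s1 : Dif (P α a b c d) (P α (a-d) (b-d) (c-d) 0) := by
    have h := difComK h0 h6 (a-d) (b-d) (c-d) 0 d
    rw [show a-d+d = a from by ring, show b-d+d = b from by ring,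
      show c-d+d = c from by ring, show (0:ℤ)+d = d from by ring] at h
    exact h
  have s2 : Dif (P α (a-d) (b-d) (c-d) 0) (P α ((a-d)%2) ((b-d)%2) ((c-d)%2) 0) :=
    ((difA' h0 h6 hD (b-d) (c-d) 0 (a-d) ((a-d)%2) ((a-d)/2) (by omega)).trans
      (difB' h0 h6 hD ((a-d)%2) (c-d) 0 (b-d) ((b-d)%2) ((b-d)/2) (by omega))).trans
      (difC' h0 h6 hD ((a-d)%2) ((b-d)%2) 0 (c-d) ((c-d)%2) ((c-d)/2) (by omega))
  have s3 : Conv (P α ((a-d)%2) ((b-d)%2) ((c-d)%2) 0) := by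
    have hp : (a-d)%2 = 0 ∨ (a-d)%2 = 1 := by omega
    have hq : (b-d)%2 = 0 ∨ (b-d)%2 = 1 := by omega
    have hr : (c-d)%2 = 0 ∨ (c-d)%2 = 1 := by omega
    rcases hp with hp | hp <;> rcases hq with hq | hq <;> rcases hr with hr | hr <;>
      rw [hp, hq, hr] <;> assumption
  exact conv_of_dif s1 (conv_of_dif s2 s3)

lemma parta {α : ℤ → ℝ} (h0 : ∀ n : ℤ, n < 0 → α n = 0)
    (h6 : Summable fun n : ℤ => |α n| ^ (6:ℕ))
    (hD : Summable fun n : ℤ => |D α n| ^ (2:ℕ)) (m₁ m₂ m₃ m₄ : ℤ) :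
    Summable fun j : ℤ => |α (j + m₁) * α (j + m₂) * G α (j + m₃) * G α (j + m₄)| := by
  have hG3 := summable_G3 h0 h6 hD
  have s1 : Summable (fun j : ℤ => |α (j+m₁)|^(6:ℕ)) := summable_shift h6 m₁
  have s2 : Summable (fun j : ℤ => |α (j+m₂)|^(6:ℕ)) := summable_shift h6 m₂
  have s3 : Summable (fun j : ℤ => |G α (j+m₃)|^(3:ℕ)) := summable_shift hG3 m₃
  have s4 : Summable (fun j : ℤ => |G α (j+m₄)|^(3:ℕ)) := summable_shift hG3 m₄
  have hgsum : Summable (fun j : ℤ => |α (j+m₁)|^(6:ℕ)/6 + |α (j+m₂)|^(6:ℕ)/6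
      + |G α (j+m₃)|^(3:ℕ)/3 + |G α (j+m₄)|^(3:ℕ)/3) :=
    (((s1.div_const 6).add (s2.div_const 6)).add
      ((s3.div_const 3).add (s4.div_const 3))).congr (fun j => by ring)
  apply Summable.of_nonneg_of_le (fun j => abs_nonneg _) (fun j => ?_) hgsum
  rw [abs_mul, abs_mul, abs_mul]
  exact younga _ _ _ _ (abs_nonneg _) (abs_nonneg _) (abs_nonneg _) (abs_nonneg _)

lemma partb {α : ℤ → ℝ} (h6 : Summable fun n : ℤ => |α n| ^ (6:ℕ))
    (hD : Summable fun n : ℤ => |D α n| ^ (2:ℕ)) (m₁ m₂ m₃ m₄ : ℤ) :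
    Summable fun j : ℤ => |α (j + m₁) * α (j + m₂) * α (j + m₃) * D α (j + m₄)| := by
  have s1 : Summable (fun j : ℤ => |α (j+m₁)|^(6:ℕ)) := summable_shift h6 m₁
  have s2 : Summable (fun j : ℤ => |α (j+m₂)|^(6:ℕ)) := summable_shift h6 m₂
  have s3 : Summable (fun j : ℤ => |α (j+m₃)|^(6:ℕ)) := summable_shift h6 m₃
  have s4 : Summable (fun j : ℤ => |D α (j+m₄)|^(2:ℕ)) := summable_shift hD m₄
  have hgsum : Summable (fun j : ℤ => |α (j+m₁)|^(6:ℕ)/6 + |α (j+m₂)|^(6:ℕ)/6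
      + |α (j+m₃)|^(6:ℕ)/6 + |D α (j+m₄)|^(2:ℕ)/2) :=
    (((s1.div_const 6).add (s2.div_const 6)).add
      ((s3.div_const 6).add (s4.div_const 2))).congr (fun j => by ring)
  apply Summable.of_nonneg_of_le (fun j => abs_nonneg _) (fun j => ?_) hgsum
  rw [abs_mul, abs_mul, abs_mul]
  exact youngb _ _ _ _ (abs_nonneg _) (abs_nonneg _) (abs_nonneg _)

end Stmt18

open scoped BigOperators

theorem stmt18 (α : ℤ → ℝ) (h0 : ∀ n : ℤ, n < 0 → α n = 0)
    (h6 : Summable fun n : ℤ => |α n| ^ (6 : ℕ))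
    (hL1 : Summable fun n : ℤ => |α (n + 3) - α (n + 2) - α (n + 1) + α n| ^ (2 : ℕ))
    (hL2 : Summable fun n : ℤ => |α (n + 2) - 2 * α (n + 1) + α n| ^ (4 : ℕ))
    (m₁ m₂ m₃ m₄ : ℤ) :
    (Summable fun j : ℤ =>
      |α (j + m₁) * α (j + m₂) * (α (j + m₃ + 2) - α (j + m₃)) * (α (j + m₄ + 2) - α (j + m₄))|) ∧
    (Summable fun j : ℤ =>
      |α (j + m₁) * α (j + m₂) * α (j + m₃) *
        ((α (j + m₄ + 3) - α (j + m₄ + 1)) - (α (j + m₄ + 2) - α (j + m₄)))|) ∧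
    (∃ L : ℝ, Filter.Tendsto
      (fun N : ℕ => ∑ j ∈ Finset.Icc (-(N : ℤ)) (N : ℤ),
        α (j + m₁) * α (j + m₂) * α (j + m₃) * (α (j + m₄ + 2) - α (j + m₄)))
      Filter.atTop (nhds L)) := by
  have hD : Summable fun n : ℤ => |Stmt18.D α n| ^ (2:ℕ) := by
    apply hL1.congr
    intro n
    have e : α (n + 3) - α (n + 2) - α (n + 1) + α n = Stmt18.D α n := by
      simp only [Stmt18.D]
      ring
    rw [e]
  refine ⟨Stmt18.parta h0 h6 hD m₁ m₂ m₃ m₄, Stmt18.partb h6 hD m₁ m₂ m₃ m₄, ?_⟩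
  exact Stmt18.convP h0 h6 hD m₁ m₂ m₃ m₄
end
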